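/- For every integer m ≥ 2 and every n divisible by m, there exists an n-element simple rank-3 matroid with no U_{3,2m+1}-restriction whose number of bases equals binom(n,3) - m·binom(n/m,3). Consequently binom(n,3) - m·binom(n/m,3) = (1 - 1/m²)·binom(n,3) + o(n³). -/

import Mathlib

open Matroid Set Filter

variable {α : Type*}

/-- The number of bases of a matroid. -/
noncomputable def Matroid.numBases (M : Matroid α) : ℕ := {B : Set α | M.IsBase B}.ncard

/-- Deletion of a set of elements from a matroid. -/
def Matroid.del (M : Matroid α) (D : Set α) : Matroid α := M ↾ (M.E \ D)

/-- Contraction of a set of elements in a matroid, defined by duality. -/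
def Matroid.con (M : Matroid α) (C : Set α) : Matroid α := (M✶ ↾ (M✶.E \ C))✶

/-- `N` is a minor of `M`: it is obtained by contracting a set `C` and deleting a set `D`. -/
def Matroid.IsMinorOf (N M : Matroid α) : Prop :=
  ∃ C D : Set α, C ⊆ M.E ∧ D ⊆ M.E ∧ Disjoint C D ∧ N = (M.con C).del D

/-- `M` is (a copy of) the uniform matroid `U_{s,t}`: it has `t` elements and its bases are
exactly the `s`-element subsets of the ground set. -/
def Matroid.IsUnif (M : Matroid α) (s t : ℕ) : Prop :=
  M.E.Finite ∧ M.E.ncard = t ∧ ∀ B, M.IsBase B ↔ B ⊆ M.E ∧ B.ncard = s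

/-- `M` has a minor isomorphic to the uniform matroid `U_{s,t}`. -/
def Matroid.HasUnifMinor (M : Matroid α) (s t : ℕ) : Prop :=
  ∃ N : Matroid α, N.IsMinorOf M ∧ N.IsUnif s t

/-- `M` has a restriction isomorphic to the uniform matroid `U_{s,t}`. -/
def Matroid.HasUnifRestriction (M : Matroid α) (s t : ℕ) : Prop :=
  ∃ X ⊆ M.E, (M ↾ X).IsUnif s t

/-- `M` has rank `r`. -/
def Matroid.RankEq (M : Matroid α) (r : ℕ) : Prop := ∃ B, M.IsBase B ∧ B.ncard = r

/-- `M` is a simple matroid: every single element and every pair of distinct elements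
of the ground set is independent. -/
def Matroid.IsSimple (M : Matroid α) : Prop :=
  (∀ e ∈ M.E, M.Indep {e}) ∧ ∀ e ∈ M.E, ∀ f ∈ M.E, e ≠ f → M.Indep {e, f}

namespace LineAux

/-- `I` is contained in a single line of quotient `c` for block size `k`. -/
def Coll (k : ℕ) (I : Set ℕ) : Prop := ∃ c, ∀ x ∈ I, x / k = c

/-- Independence predicate for the matroid with `m` disjoint lines of `k` points. -/
def Ind (m k : ℕ) (I : Set ℕ) : Prop :=
  I ⊆ Set.Iio (m * k) ∧ I.ncard ≤ 3 ∧ ¬(I.ncard = 3 ∧ Coll k I)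

lemma Ind.finite {m k : ℕ} {I : Set ℕ} (h : Ind m k I) : I.Finite :=
  (Set.finite_Iio _).subset h.1

lemma ind_empty (m k : ℕ) : Ind m k ∅ := by
  refine ⟨empty_subset _, by simp, ?_⟩
  simp [Set.ncard_empty]

lemma ind_subset {m k : ℕ} ⦃I J : Set ℕ⦄ (hJ : Ind m k J) (hIJ : I ⊆ J) : Ind m k I := by
  have hJfin := hJ.finite
  have hle : I.ncard ≤ J.ncard := Set.ncard_le_ncard hIJ hJfin
  refine ⟨hIJ.trans hJ.1, hle.trans hJ.2.1, ?_⟩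
  rintro ⟨h3, c, hc⟩
  have hJ3 := hJ.2.1
  have : I = J := Set.eq_of_subset_of_ncard_le hIJ (by omega) hJfin
  exact hJ.2.2 ⟨by omega, c, fun x hx => hc x (this ▸ hx)⟩

lemma ind_aug {m k : ℕ} : ∀ ⦃I J : Set ℕ⦄, Ind m k I → Ind m k J →
    I.ncard < J.ncard → ∃ e ∈ J, e ∉ I ∧ Ind m k (insert e I) := by
  intro I J hI hJ hlt
  have hIfin := hI.finite
  have hJI : ∃ e ∈ J, e ∉ I := by
    by_contra h
    push_neg at h
    exact absurd (Set.ncard_le_ncard h hIfin) (not_le.2 hlt)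
  by_cases h2 : I.ncard ≤ 1
  · obtain ⟨e, heJ, heI⟩ := hJI
    have hins : (insert e I).ncard = I.ncard + 1 := Set.ncard_insert_of_notMem heI hIfin
    exact ⟨e, heJ, heI, Set.insert_subset (hJ.1 heJ) hI.1, by omega,
      fun h => absurd h.1 (by omega)⟩
  · have hI2 : I.ncard = 2 := by have := hI.2.1; have := hJ.2.1; omega
    have hJ3 : J.ncard = 3 := by have := hJ.2.1; omega
    obtain ⟨a, b, hab, rfl⟩ := Set.ncard_eq_two.1 hI2
    have haI : a ∈ ({a, b} : Set ℕ) := Set.mem_insert _ _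
    have hbI : b ∈ ({a, b} : Set ℕ) := Set.mem_insert_of_mem _ rfl
    by_cases hline : a / k = b / k
    · have hex : ∃ e ∈ J, e / k ≠ a / k := by
        by_contra h
        push_neg at h
        exact hJ.2.2 ⟨hJ3, a / k, h⟩
      obtain ⟨e, heJ, hek⟩ := hex
      have heI : e ∉ ({a, b} : Set ℕ) := by
        rintro (rfl | rfl)
        · exact hek rfl
        · exact hek hline.symm
      have hins : (insert e ({a, b} : Set ℕ)).ncard = 3 :=
        by rw [Set.ncard_insert_of_notMem heI hIfin, hI2]
      refine ⟨e, heJ, heI, Set.insert_subset (hJ.1 heJ) hI.1, le_of_eq hins, ?_⟩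
      rintro ⟨-, c, hc⟩
      exact hek ((hc e (Set.mem_insert _ _)).trans (hc a (Set.mem_insert_of_mem _ haI)).symm)
    · obtain ⟨e, heJ, heI⟩ := hJI
      have hins : (insert e ({a, b} : Set ℕ)).ncard = 3 :=
        by rw [Set.ncard_insert_of_notMem heI hIfin, hI2]
      refine ⟨e, heJ, heI, Set.insert_subset (hJ.1 heJ) hI.1, le_of_eq hins, ?_⟩
      rintro ⟨-, c, hc⟩
      exact hline ((hc a (Set.mem_insert_of_mem _ haI)).trans
        (hc b (Set.mem_insert_of_mem _ hbI)).symm)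

/-- The matroid with `m` disjoint lines of `k` points each. -/
noncomputable def lineM (m k : ℕ) : Matroid ℕ :=
  (IndepMatroid.ofFinite (Set.finite_Iio (m * k)) (Ind m k) (ind_empty m k)
    (fun _ _ hJ hIJ => ind_subset hJ hIJ) ind_aug (fun _ hI => hI.1)).matroid

@[simp] lemma lineM_indep {m k : ℕ} {I : Set ℕ} : (lineM m k).Indep I ↔ Ind m k I := by
  simp [lineM]

@[simp] lemma lineM_E {m k : ℕ} : (lineM m k).E = Set.Iio (m * k) := rfl

lemma ncard_Iio (n : ℕ) : (Set.Iio n).ncard = n := by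
  rw [← Finset.coe_range, Set.ncard_coe_finset, Finset.card_range]

lemma ind_extend {m k : ℕ} (hm : 2 ≤ m) (hk : 1 ≤ k) (h3 : 3 ≤ m * k) {I : Set ℕ}
    (hI : Ind m k I) (h2 : I.ncard ≤ 2) : ∃ e ∉ I, Ind m k (insert e I) := by
  have hIfin := hI.finite
  have hk0 : 0 < k := hk
  have h2k : 2 * k ≤ m * k := Nat.mul_le_mul_right k hm
  by_cases hcol : Coll k I
  · rcases I.eq_empty_or_nonempty with rfl | ⟨a, ha⟩
    · refine ⟨0, by simp, ?_⟩
      refine ⟨by simp; omega, ?_, ?_⟩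
      · simp [Set.ncard_singleton]
      · simp [Set.ncard_singleton]
    · obtain ⟨c₀, hc₀⟩ := hcol
      set c := a / k with hc
      set e := if c = 0 then k else 0 with he
      have hek : e / k ≠ c := by
        rcases eq_or_ne c 0 with h | h
        · simp [he, h, Nat.div_self hk0]
        · simp [he, h, Nat.zero_div]
          omega
      have heE : e < m * k := by
        rcases eq_or_ne c 0 with h | h <;> simp [he, h] <;> omega
      have heI : e ∉ I := by
        intro hmem
        exact hek ((hc₀ e hmem).trans (hc₀ a ha).symm)
      have hins : (insert e I).ncard = I.ncard + 1 := Set.ncard_insert_of_notMem heI hIfin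
      refine ⟨e, heI, Set.insert_subset heE hI.1, by omega, ?_⟩
      rintro ⟨-, c', hc'⟩
      exact hek ((hc' e (Set.mem_insert _ _)).trans (hc' a (Set.mem_insert_of_mem _ ha)).symm)
  · have hex : ∃ a ∈ I, ∃ b ∈ I, a / k ≠ b / k := by
      by_contra h
      push_neg at h
      rcases I.eq_empty_or_nonempty with rfl | ⟨a, ha⟩
      · exact hcol ⟨0, by simp⟩
      · exact hcol ⟨a / k, fun x hx => h x hx a ha⟩
    obtain ⟨a, ha, b, hb, hab⟩ := hex
    have hne : I ≠ Set.Iio (m * k) := by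
      intro h
      rw [h, ncard_Iio] at h2
      omega
    obtain ⟨e, heE, heI⟩ := Set.exists_of_ssubset (ssubset_of_subset_of_ne hI.1 hne)
    have hins : (insert e I).ncard = I.ncard + 1 := Set.ncard_insert_of_notMem heI hIfin
    refine ⟨e, heI, Set.insert_subset heE hI.1, by omega, ?_⟩
    rintro ⟨-, c, hc⟩
    exact hab ((hc a (Set.mem_insert_of_mem _ ha)).trans (hc b (Set.mem_insert_of_mem _ hb)).symm)

lemma lineM_base {m k : ℕ} (hm : 2 ≤ m) (hk : 1 ≤ k) (h3 : 3 ≤ m * k) {B : Set ℕ} :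
    (lineM m k).IsBase B ↔ B ⊆ Set.Iio (m * k) ∧ B.ncard = 3 ∧ ¬ Coll k B := by
  rw [isBase_iff_maximal_indep, maximal_subset_iff]
  simp only [lineM_indep]
  constructor
  · rintro ⟨hB, hmax⟩
    have h3' : B.ncard = 3 := by
      by_contra h
      have h2 : B.ncard ≤ 2 := by have := hB.2.1; omega
      obtain ⟨e, heI, hins⟩ := ind_extend hm hk h3 hB h2
      have heq := hmax hins (Set.subset_insert _ _)
      exact heI (heq ▸ Set.mem_insert _ _)
    exact ⟨hB.1, h3', fun hc => hB.2.2 ⟨h3', hc⟩⟩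
  · rintro ⟨hBE, h3', hncol⟩
    refine ⟨⟨hBE, le_of_eq h3', fun h => hncol h.2⟩, ?_⟩
    intro J hJ hBJ
    exact Set.eq_of_subset_of_ncard_le hBJ (by rw [h3']; exact hJ.2.1) hJ.finite

/-- decidable collinearity predicate on finsets -/
def pColl (k : ℕ) (s : Finset ℕ) : Prop := ∀ x ∈ s, ∀ y ∈ s, x / k = y / k

instance (k : ℕ) : DecidablePred (pColl k) := fun s => by
  unfold pColl; infer_instance

def lineFin (m k c : ℕ) : Finset ℕ := (Finset.range (m * k)).filter (fun x => x / k = c)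

lemma lineFin_eq {m k : ℕ} (hk : 0 < k) {c : ℕ} (hc : c < m) :
    lineFin m k c = Finset.Ico (c * k) (c * k + k) := by
  ext x
  simp only [lineFin, Finset.mem_filter, Finset.mem_range, Finset.mem_Ico]
  rw [show c * k + k = (c + 1) * k by ring]
  constructor
  · rintro ⟨hx, rfl⟩
    exact ⟨Nat.div_mul_le_self x k, (Nat.div_lt_iff_lt_mul hk).1 (Nat.lt_succ_self _)⟩
  · rintro ⟨h1, h2⟩
    have hckm : (c + 1) * k ≤ m * k := Nat.mul_le_mul_right k (by omega)
    refine ⟨lt_of_lt_of_le h2 hckm, ?_⟩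
    exact le_antisymm (Nat.lt_succ_iff.1 ((Nat.div_lt_iff_lt_mul hk).2 h2))
      ((Nat.le_div_iff_mul_le hk).2 h1)

lemma card_lineFin {m k : ℕ} (hk : 0 < k) {c : ℕ} (hc : c < m) :
    (lineFin m k c).card = k := by
  rw [lineFin_eq hk hc, Nat.card_Ico]
  omega

lemma filter_coll_eq {m k : ℕ} (hk : 0 < k) :
    ((Finset.range (m * k)).powersetCard 3).filter (pColl k) =
      (Finset.range m).biUnion (fun c => (lineFin m k c).powersetCard 3) := by
  ext s
  simp only [Finset.mem_filter, Finset.mem_powersetCard, Finset.mem_biUnion, Finset.mem_range]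
  constructor
  · rintro ⟨⟨hsub, hcard⟩, hp⟩
    have hne : s.Nonempty := Finset.card_pos.1 (by omega)
    obtain ⟨a, ha⟩ := hne
    have haE : a < m * k := Finset.mem_range.1 (hsub ha)
    refine ⟨a / k, (Nat.div_lt_iff_lt_mul hk).2 haE, ?_, hcard⟩
    intro x hx
    simp only [lineFin, Finset.mem_filter, Finset.mem_range]
    exact ⟨Finset.mem_range.1 (hsub hx), hp x hx a ha⟩
  · rintro ⟨c, hc, hsub, hcard⟩
    refine ⟨⟨hsub.trans (Finset.filter_subset _ _), hcard⟩, ?_⟩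
    intro x hx y hy
    have hx' := (Finset.mem_filter.1 (hsub hx)).2
    have hy' := (Finset.mem_filter.1 (hsub hy)).2
    rw [hx', hy']

lemma card_filter_coll {m k : ℕ} (hk : 0 < k) :
    (((Finset.range (m * k)).powersetCard 3).filter (pColl k)).card = m * k.choose 3 := by
  rw [filter_coll_eq hk]
  rw [Finset.card_biUnion]
  · rw [Finset.sum_congr rfl (fun c hc => ?_), Finset.sum_const, Finset.card_range, smul_eq_mul]
    rw [Finset.card_powersetCard, card_lineFin hk (Finset.mem_range.1 hc)]
  · intro c1 h1 c2 h2 hne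
    rw [Function.onFun, Finset.disjoint_left]
    intro s hs1 hs2
    rw [Finset.mem_powersetCard] at hs1 hs2
    have hne' : s.Nonempty := Finset.card_pos.1 (by omega)
    obtain ⟨a, ha⟩ := hne'
    have h1' := (Finset.mem_filter.1 (hs1.1 ha)).2
    have h2' := (Finset.mem_filter.1 (hs2.1 ha)).2
    exact hne (h1' ▸ h2' ▸ rfl)

/-- the finset of bases -/
def basesFin (m k : ℕ) : Finset (Finset ℕ) :=
  ((Finset.range (m * k)).powersetCard 3).filter (fun s => ¬ pColl k s)

lemma card_basesFin {m k : ℕ} (hk : 0 < k) :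
    (basesFin m k).card = (m * k).choose 3 - m * k.choose 3 := by
  have hsplit := Finset.card_filter_add_card_filter_not
    (s := (Finset.range (m * k)).powersetCard 3) (p := pColl k)
  have htot : ((Finset.range (m * k)).powersetCard 3).card = (m * k).choose 3 := by
    rw [Finset.card_powersetCard, Finset.card_range]
  have hcoll := card_filter_coll (m := m) hk
  unfold basesFin
  omega

lemma bases_set_eq {m k : ℕ} (hm : 2 ≤ m) (hk : 1 ≤ k) (h3 : 3 ≤ m * k) :
    {B : Set ℕ | (lineM m k).IsBase B} =
      (fun s : Finset ℕ => (↑s : Set ℕ)) '' ↑(basesFin m k) := by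
  ext B
  simp only [Set.mem_setOf_eq, lineM_base hm hk h3, Set.mem_image, Finset.mem_coe,
    basesFin, Finset.mem_filter, Finset.mem_powersetCard]
  constructor
  · rintro ⟨hBE, hB3, hBcol⟩
    have hfin : B.Finite := (Set.finite_Iio _).subset hBE
    refine ⟨hfin.toFinset, ⟨⟨?_, ?_⟩, ?_⟩, hfin.coe_toFinset⟩
    · intro x hx
      exact Finset.mem_range.2 (hBE (hfin.mem_toFinset.1 hx))
    · rw [← Set.ncard_eq_toFinset_card B hfin]; exact hB3
    · intro hp
      have hne : B.Nonempty := Set.nonempty_of_ncard_ne_zero (by omega)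
      obtain ⟨a, ha⟩ := hne
      exact hBcol ⟨a / k, fun x hx => hp x (hfin.mem_toFinset.2 hx) a (hfin.mem_toFinset.2 ha)⟩
  · rintro ⟨s, ⟨⟨hsub, hcard⟩, hnp⟩, rfl⟩
    refine ⟨fun x hx => Finset.mem_range.1 (hsub (Finset.mem_coe.1 hx)), ?_, ?_⟩
    · rw [Set.ncard_coe_finset]; exact hcard
    · rintro ⟨c, hc⟩
      exact hnp (fun x hx y hy =>
        (hc x (Finset.mem_coe.2 hx)).trans (hc y (Finset.mem_coe.2 hy)).symm)

lemma two_mul_choose_two (j : ℕ) : 2 * (j + 1).choose 2 = (j + 1) * j := by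
  induction j with
  | zero => rfl
  | succ j ih =>
    have h1 : (j + 1 + 1).choose 2 = (j + 1).choose 1 + (j + 1).choose 2 :=
      Nat.choose_succ_succ _ _
    rw [h1, Nat.mul_add, ih, Nat.choose_one_right]
    ring

lemma six_mul_choose_three (j : ℕ) : 6 * (j + 2).choose 3 = (j + 2) * (j + 1) * j := by
  induction j with
  | zero => rfl
  | succ j ih =>
    have h1 : (j + 2 + 1).choose 3 = (j + 2).choose 2 + (j + 2).choose 3 :=
      Nat.choose_succ_succ _ _
    have h2 : 2 * (j + 1 + 1).choose 2 = (j + 1 + 1) * (j + 1) := two_mul_choose_two (j + 1)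
    have h2' : 6 * (j + 2).choose 2 = 3 * ((j + 2) * (j + 1)) := by
      have : (j + 1 + 1) = (j + 2) := rfl
      rw [this] at h2
      omega
    calc 6 * (j + 1 + 2).choose 3 = 6 * (j + 2).choose 3 + 6 * (j + 2).choose 2 := by
          have : (j + 1 + 2) = (j + 2 + 1) := rfl
          rw [this, h1]; ring
      _ = (j + 2) * (j + 1) * j + 3 * ((j + 2) * (j + 1)) := by rw [ih, h2']
      _ = (j + 1 + 2) * (j + 1 + 1) * (j + 1) := by ring

lemma cast_choose_three {n : ℕ} (hn : 2 ≤ n) :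
    ((n.choose 3 : ℕ) : ℝ) = n * ((n : ℝ) - 1) * ((n : ℝ) - 2) / 6 := by
  obtain ⟨j, rfl⟩ : ∃ j, n = j + 2 := ⟨n - 2, by omega⟩
  have h := six_mul_choose_three j
  have h' : ((6 * (j + 2).choose 3 : ℕ) : ℝ) = (((j + 2) * (j + 1) * j : ℕ) : ℝ) := by
    exact_mod_cast h
  push_cast at h' ⊢
  linarith

lemma limit_part (m : ℕ) (hm : 2 ≤ m) :
    Filter.Tendsto
      (fun k : ℕ =>
        ((((m * k).choose 3 : ℝ) - (m : ℝ) * (k.choose 3 : ℝ)) -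
            (1 - 1 / (m : ℝ) ^ 2) * ((m * k).choose 3 : ℝ)) / ((m : ℝ) * (k : ℝ)) ^ 3)
      Filter.atTop (nhds 0) := by
  have hm0 : (m : ℝ) ≠ 0 := by positivity
  set g : ℕ → ℝ := fun k =>
    ((m : ℝ) - 1) / (2 * (m : ℝ) ^ 3) * (1 / (k : ℝ)) +
      (2 / (m : ℝ) - 2 * (m : ℝ)) / (6 * (m : ℝ) ^ 3) * (1 / (k : ℝ)) ^ 2 with hg
  have hgt : Tendsto g atTop (nhds 0) := by
    have t1 : Tendsto (fun k : ℕ => 1 / (k : ℝ)) atTop (nhds 0) :=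
      tendsto_one_div_atTop_nhds_zero_nat
    have h := (t1.const_mul (((m : ℝ) - 1) / (2 * (m : ℝ) ^ 3))).add
      (((t1.pow 2)).const_mul ((2 / (m : ℝ) - 2 * (m : ℝ)) / (6 * (m : ℝ) ^ 3)))
    simpa [hg] using h
  refine Tendsto.congr' ?_ hgt
  filter_upwards [eventually_ge_atTop 2] with k hk2
  have hkpos : (0 : ℝ) < (k : ℝ) := by exact_mod_cast lt_of_lt_of_le Nat.zero_lt_two hk2
  have hk0 : (k : ℝ) ≠ 0 := ne_of_gt hkpos
  have hmk2 : 2 ≤ m * k := le_trans (by omega) (Nat.mul_le_mul hm hk2)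
  rw [hg]
  simp only
  rw [cast_choose_three hmk2, cast_choose_three hk2]
  push_cast
  field_simp
  ring

end LineAux

open LineAux
/-- For every `m ≥ 2` and every `n ≥ 3` divisible by `m`, there is an `n`-element simple
rank-3 matroid with no `U_{3,2m+1}`-restriction having exactly
`binom(n,3) - m·binom(n/m,3)` bases; moreover this count is
`(1 - 1/m²)·binom(n,3) + o(n³)` along multiples `n = m·k`. -/
theorem unif_3_odd_restriction_free_lower_bound (m : ℕ) (hm : 2 ≤ m) :
    (∀ n : ℕ, 3 ≤ n → m ∣ n →
      ∃ M : Matroid ℕ, M.E.Finite ∧ M.E.ncard = n ∧ M.IsSimple ∧ M.RankEq 3 ∧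
        ¬ M.HasUnifRestriction 3 (2 * m + 1) ∧
        M.numBases = n.choose 3 - m * (n / m).choose 3) ∧
    Filter.Tendsto
      (fun k : ℕ =>
        ((((m * k).choose 3 : ℝ) - (m : ℝ) * (k.choose 3 : ℝ)) -
            (1 - 1 / (m : ℝ) ^ 2) * ((m * k).choose 3 : ℝ)) / ((m : ℝ) * (k : ℝ)) ^ 3)
      Filter.atTop (nhds 0) := by
  constructor
  · rintro n hn3 ⟨k, rfl⟩
    have hk : 1 ≤ k := by
      rcases Nat.eq_zero_or_pos k with rfl | h
      · omega
      · exact h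
    have hk0 : 0 < k := hk
    have h2k : 2 * k ≤ m * k := Nat.mul_le_mul_right k hm
    have hdiv : m * k / m = k := Nat.mul_div_cancel_left k (by omega)
    refine ⟨lineM m k, ?_, ?_, ?_, ?_, ?_, ?_⟩
    · exact Set.finite_Iio _
    · rw [lineM_E, ncard_Iio]
    · constructor
      · intro e he
        rw [lineM_E, Set.mem_Iio] at he
        refine lineM_indep.2 ⟨Set.singleton_subset_iff.2 he, by simp, ?_⟩
        rintro ⟨h1, -⟩
        rw [Set.ncard_singleton] at h1
        omega
      · intro e he f hf hef
        rw [lineM_E, Set.mem_Iio] at he hf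
        refine lineM_indep.2 ⟨?_, ?_, ?_⟩
        · intro x hx
          rcases hx with rfl | rfl
          · exact he
          · exact hf
        · rw [Set.ncard_pair hef]; omega
        · rintro ⟨h1, -⟩
          rw [Set.ncard_pair hef] at h1
          omega
    · refine ⟨{0, k, m * k - 1}, ?_, ?_⟩
      · rw [lineM_base hm hk hn3]
        refine ⟨?_, ?_, ?_⟩
        · intro x hx
          simp only [Set.mem_insert_iff, Set.mem_singleton_iff] at hx
          rcases hx with rfl | rfl | rfl <;> simp [Set.mem_Iio] <;> omega
        · exact Set.ncard_eq_three.2 ⟨0, k, m * k - 1, by omega, by omega, by omega, rfl⟩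
        · rintro ⟨c, hc⟩
          have h0 := hc 0 (Set.mem_insert _ _)
          have hk' := hc k (Set.mem_insert_of_mem _ (Set.mem_insert _ _))
          rw [Nat.zero_div] at h0
          rw [Nat.div_self hk0] at hk'
          omega
      · exact Set.ncard_eq_three.2 ⟨0, k, m * k - 1, by omega, by omega, by omega, rfl⟩
    · rintro ⟨X, hXE, -, hXcard, hbases⟩
      rw [Matroid.restrict_ground_eq] at hXcard
      rw [lineM_E] at hXE
      have hXfin : X.Finite := (Set.finite_Iio _).subset hXE
      have hTcard : hXfin.toFinset.card = 2 * m + 1 := by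
        rw [← Set.ncard_eq_toFinset_card X hXfin]; exact hXcard
      have hmaps : ∀ a ∈ hXfin.toFinset, a / k ∈ Finset.range m := fun a ha =>
        Finset.mem_range.2 ((Nat.div_lt_iff_lt_mul hk0).2 (hXE (hXfin.mem_toFinset.1 ha)))
      have hlt : (Finset.range m).card * 2 < hXfin.toFinset.card := by
        rw [Finset.card_range, hTcard]; omega
      obtain ⟨c, -, hc⟩ := Finset.exists_lt_card_fiber_of_mul_lt_card_of_maps_to hmaps hlt
      obtain ⟨t, hts, htc⟩ := Finset.exists_subset_card_eq (show 3 ≤ _ from hc)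
      have htX : (↑t : Set ℕ) ⊆ X := fun x hx =>
        hXfin.mem_toFinset.1 (Finset.filter_subset _ _ (hts (Finset.mem_coe.1 hx)))
      have hbase' : ((lineM m k) ↾ X).IsBase ↑t := (hbases ↑t).2
        ⟨by rw [Matroid.restrict_ground_eq]; exact htX,
          by rw [Set.ncard_coe_finset]; exact htc⟩
      have hindep := hbase'.indep
      rw [Matroid.restrict_indep_iff] at hindep
      have hind := lineM_indep.1 hindep.1
      apply hind.2.2
      refine ⟨by rw [Set.ncard_coe_finset, htc], c, ?_⟩
      intro x hx
      exact (Finset.mem_filter.1 (hts (Finset.mem_coe.1 hx))).2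
    · show ({B : Set ℕ | (lineM m k).IsBase B}).ncard = _
      rw [bases_set_eq hm hk hn3, Set.ncard_image_of_injective _ Finset.coe_injective,
        Set.ncard_coe_finset, card_basesFin hk0, hdiv]
  · exact limit_part m hm
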